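/- Let X be a geodesic metric space that is δ-hyperbolic (every geodesic triangle is δ-thin). There exist constants D₁, D₂ ≥ 0 depending only on δ with the following property. Let h be an isometry of X admitting a geodesic axis α, i.e., a bi-infinite geodesic such that hⁿ(α) is contained in the 2δ-neighborhood of α for every integer n. Let x ∈ X and let q be a nearest-point projection of x to α. If d(q, h(q)) > 28δ, then every geodesic γ from x to h(x) can be written as a concatenation γ = γ₁γ₂γ₃ of three subsegments such that: the terminal point of γ₁ is within distance D₁ of q; the initial point of γ₃ is within distance D₁ of h(q); γ₂ is contained in the D₂-neighborhood of α; and the length of γ₂ is at least d(q, h(q)) − 28δ. (One may take D₁ = 10δ and D₂ = 3δ.) -/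

import Mathlib

open Metric

/-- `γ` restricted to `[a, b]` is a geodesic parametrized by arc length. -/
def IsGeodesicOn {X : Type*} [MetricSpace X] (γ : ℝ → X) (a b : ℝ) : Prop :=
  ∀ s ∈ Set.Icc a b, ∀ t ∈ Set.Icc a b, dist (γ s) (γ t) = |s - t|

/-- `γ` is a geodesic segment from `x` to `y`, parametrized by arc length on
`[0, dist x y]`. -/
def IsGeodesicSegment {X : Type*} [MetricSpace X] (γ : ℝ → X) (x y : X) : Prop :=
  γ 0 = x ∧ γ (dist x y) = y ∧ IsGeodesicOn γ 0 (dist x y)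

/-- A geodesic metric space: any two points are joined by a geodesic segment. -/
def GeodesicSpace (X : Type*) [MetricSpace X] : Prop :=
  ∀ x y : X, ∃ γ : ℝ → X, IsGeodesicSegment γ x y

/-- Every geodesic triangle is `δ`-thin: each side is contained in the
`δ`-neighborhood of the union of the other two sides. -/
def ThinTriangles (X : Type*) [MetricSpace X] (δ : ℝ) : Prop :=
  ∀ x y z : X, ∀ γ₁ γ₂ γ₃ : ℝ → X,
    IsGeodesicSegment γ₁ x y → IsGeodesicSegment γ₂ y z → IsGeodesicSegment γ₃ x z →
    ∀ t ∈ Set.Icc (0 : ℝ) (dist x z),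
      Metric.infDist (γ₃ t) (γ₁ '' Set.Icc (0 : ℝ) (dist x y) ∪
        γ₂ '' Set.Icc (0 : ℝ) (dist y z)) ≤ δ

variable {X : Type*} [MetricSpace X]

lemma geo_compact_img {γ : ℝ → X} {a b : ℝ} (h : IsGeodesicOn γ a b) :
    IsCompact (γ '' Set.Icc a b) := by
  apply IsCompact.image_of_continuousOn isCompact_Icc
  have : LipschitzOnWith 1 γ (Set.Icc a b) := by
    rw [lipschitzOnWith_iff_dist_le_mul]
    intro s hs t ht
    rw [h s hs t ht]
    simp [Real.dist_eq]
  exact this.continuousOn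

lemma geo_img_nonempty {γ : ℝ → X} {x y : X} (h : IsGeodesicSegment γ x y) :
    (γ '' Set.Icc 0 (dist x y)).Nonempty :=
  ⟨x, ⟨0, ⟨le_refl _, dist_nonneg⟩, h.1⟩⟩

/-- a subsegment of a geodesic line, as a geodesic segment whose image lies on the line -/
lemma line_subseg (α : ℝ → X) (hα : ∀ s t, dist (α s) (α t) = |s - t|) (s₀ s₁ : ℝ) :
    ∃ f : ℝ → X, IsGeodesicSegment f (α s₀) (α s₁) ∧
      f '' Set.Icc 0 (dist (α s₀) (α s₁)) ⊆ Set.range α := by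
  have hd : dist (α s₀) (α s₁) = |s₀ - s₁| := hα s₀ s₁
  rcases le_total s₀ s₁ with hle | hle
  · refine ⟨fun t => α (s₀ + t), ⟨by simp, ?_, ?_⟩, ?_⟩
    · rw [hd, abs_of_nonpos (by linarith)]; ring_nf
    · intro s _ t _; rw [hα]; congr 1; ring_nf
    · rintro y ⟨t, _, rfl⟩; exact ⟨s₀ + t, rfl⟩
  · refine ⟨fun t => α (s₀ - t), ⟨by simp, ?_, ?_⟩, ?_⟩
    · rw [hd, abs_of_nonneg (by linarith)]; ring_nf
    · intro s _ t _
      rw [hα, show s₀ - s - (s₀ - t) = t - s by ring, abs_sub_comm]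
    · rintro y ⟨t, _, rfl⟩; exact ⟨s₀ - t, rfl⟩

lemma exists_nearest (α : ℝ → X) (hα : ∀ s t, dist (α s) (α t) = |s - t|) (c : X) :
    ∃ s₀ : ℝ, ∀ s, dist c (α s₀) ≤ dist c (α s) := by
  set K := dist c (α 0) with hK
  have hK0 : 0 ≤ K := dist_nonneg
  have hcont : Continuous fun s => dist c (α s) := by
    have : Isometry α := Isometry.of_dist_eq hα
    exact continuous_const.dist this.continuous
  obtain ⟨s₀, hs₀mem, hmin⟩ := (isCompact_Icc (a := -(2*K+1)) (b := 2*K+1)).exists_isMinOn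
    ⟨0, by constructor <;> nlinarith [dist_nonneg (x := c) (y := α 0)]⟩ hcont.continuousOn
  refine ⟨s₀, fun s => ?_⟩
  rcases le_or_gt (dist c (α s)) K with hs | hs
  · by_cases hmem : s ∈ Set.Icc (-(2*K+1)) (2*K+1)
    · exact hmin hmem
    · exfalso
      have h1 : dist (α 0) (α s) ≤ dist (α 0) c + dist c (α s) := dist_triangle _ _ _
      rw [hα] at h1
      simp only [Set.mem_Icc, not_and_or, not_le] at hmem
      rw [dist_comm (α 0) c, ← hK] at h1
      rcases hmem with hm | hm
      · rw [abs_of_pos (by linarith : (0:ℝ) < 0 - s)] at h1; linarith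
      · rw [abs_of_neg (by linarith : (0:ℝ) - s < 0)] at h1; linarith
  · calc dist c (α s₀) ≤ dist c (α 0) := hmin ⟨by nlinarith [dist_nonneg (x := c) (y := α 0)],
        by nlinarith [dist_nonneg (x := c) (y := α 0)]⟩
      _ ≤ dist c (α s) := by linarith

/-- two-set switch point lemma -/
lemma switch_point {f g : ℝ → ℝ} {D c : ℝ} (hD : 0 ≤ D)
    (hf : ∀ s ∈ Set.Icc 0 D, ∀ t ∈ Set.Icc 0 D, f s ≤ f t + |s - t|)
    (hg : ∀ s ∈ Set.Icc 0 D, ∀ t ∈ Set.Icc 0 D, g s ≤ g t + |s - t|)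
    (hf0 : f 0 ≤ c) (hgD : g D ≤ c)
    (hcover : ∀ t ∈ Set.Icc 0 D, f t ≤ c ∨ g t ≤ c) :
    ∃ T ∈ Set.Icc 0 D, f T ≤ c ∧ g T ≤ c := by
  set S : Set ℝ := {t | t ∈ Set.Icc 0 D ∧ f t ≤ c} with hS
  have hne : S.Nonempty := ⟨0, ⟨le_refl _, hD⟩, hf0⟩
  have hbdd : BddAbove S := ⟨D, fun t ht => ht.1.2⟩
  set T := sSup S with hT
  have hT0 : 0 ≤ T := le_csSup hbdd ⟨⟨le_refl _, hD⟩, hf0⟩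
  have hTD : T ≤ D := csSup_le hne fun t ht => ht.1.2
  have hTmem : T ∈ Set.Icc 0 D := ⟨hT0, hTD⟩
  have hfT : f T ≤ c := by
    by_contra hc
    push_neg at hc
    obtain ⟨s, hsS, hslt⟩ := exists_lt_of_lt_csSup hne (by linarith : T - (f T - c) < T)
    have hsT : s ≤ T := le_csSup hbdd hsS
    have := hf T hTmem s hsS.1
    rw [abs_of_nonneg (by linarith)] at this
    linarith [hsS.2]
  refine ⟨T, hTmem, hfT, ?_⟩
  by_contra hc
  push_neg at hc
  have hTD' : T < D := by
    rcases lt_or_eq_of_le hTD with hlt | heq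
    · exact hlt
    · rw [heq] at hc; linarith
  set t := min (T + (g T - c)/2) D with ht
  have htmem : t ∈ Set.Icc 0 D := ⟨le_min (by linarith) hD, min_le_right _ _⟩
  have htT : T < t := lt_min (by linarith) hTD'
  have hft : ¬ f t ≤ c := by
    intro hft
    have : t ≤ T := le_csSup hbdd ⟨htmem, hft⟩
    linarith
  have hgt : g t ≤ c := (hcover t htmem).resolve_left hft
  have h2 := hg T hTmem t htmem
  rw [abs_of_nonpos (by linarith)] at h2
  have h3 : t - T ≤ (g T - c)/2 := by
    have := min_le_left (T + (g T - c)/2) D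
    rw [← ht] at this
    linarith
  linarith

/-- coarse uniqueness of nearest-point projections to a geodesic line -/
lemma coarse_unique {δ : ℝ} (hδ : 0 ≤ δ) (hgeo : GeodesicSpace X) (hthin : ThinTriangles X δ)
    (α : ℝ → X) (hα : ∀ s t, dist (α s) (α t) = |s - t|)
    (x : X) (s₀ : ℝ) (hproj : ∀ t, dist x (α s₀) ≤ dist x (α t))
    (s₁ : ℝ) {k : ℝ} (hk : 0 ≤ k) (hw : dist x (α s₁) ≤ dist x (α s₀) + k) :
    dist (α s₀) (α s₁) ≤ 2 * k + 4 * δ := by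
  obtain ⟨f, hf, hfim⟩ := line_subseg α hα s₀ s₁
  obtain ⟨g₁, hg₁⟩ := hgeo (α s₀) x
  obtain ⟨g₂, hg₂⟩ := hgeo x (α s₁)
  set d := dist (α s₀) (α s₁) with hdd
  have hd0 : (0:ℝ) ≤ d := dist_nonneg
  have htm : d/2 ∈ Set.Icc (0:ℝ) d := ⟨by linarith, by linarith⟩
  have hthin' := hthin (α s₀) x (α s₁) g₁ g₂ f hg₁ hg₂ hf (d/2) htm
  set m := f (d/2) with hm
  have hm0 : dist m (α s₀) = d/2 := by
    calc dist m (α s₀) = dist (f (d/2)) (f 0) := by rw [hf.1]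
    _ = |d/2 - 0| := hf.2.2 (d/2) htm 0 ⟨le_refl _, hd0⟩
    _ = d/2 := by rw [sub_zero, abs_of_nonneg (by linarith)]
  have hm1 : dist m (α s₁) = d/2 := by
    calc dist m (α s₁) = dist (f (d/2)) (f d) := by rw [hf.2.1]
    _ = |d/2 - d| := hf.2.2 (d/2) htm d ⟨hd0, le_refl _⟩
    _ = d/2 := by rw [abs_of_nonpos (by linarith)]; ring
  have hmrange : m ∈ Set.range α := hfim ⟨d/2, htm, rfl⟩
  obtain ⟨sm, hsm⟩ := hmrange
  have hxm : dist x (α s₀) ≤ dist x m := by rw [← hsm]; exact hproj sm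
  -- the union is compact and nonempty
  have hK : IsCompact (g₁ '' Set.Icc 0 (dist (α s₀) x) ∪ g₂ '' Set.Icc 0 (dist x (α s₁))) :=
    (geo_compact_img hg₁.2.2).union (geo_compact_img hg₂.2.2)
  obtain ⟨u, humem, hueq⟩ := hK.exists_infDist_eq_dist
    ((geo_img_nonempty hg₁).mono Set.subset_union_left) m
  have hud : dist m u ≤ δ := by rw [← hueq]; exact hthin'
  rcases humem with ⟨τ, hτ, rfl⟩ | ⟨τ, hτ, rfl⟩
  · -- u on the geodesic from α s₀ to x
    have h1 : dist (α s₀) (g₁ τ) = τ := by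
      calc dist (α s₀) (g₁ τ) = dist (g₁ 0) (g₁ τ) := by rw [hg₁.1]
      _ = |0 - τ| := hg₁.2.2 0 ⟨le_refl _, dist_nonneg⟩ τ hτ
      _ = τ := by rw [zero_sub, abs_neg, abs_of_nonneg hτ.1]
    have h2 : dist (g₁ τ) x = dist (α s₀) x - τ := by
      calc dist (g₁ τ) x = dist (g₁ τ) (g₁ (dist (α s₀) x)) := by rw [hg₁.2.1]
      _ = |τ - dist (α s₀) x| := hg₁.2.2 τ hτ _ ⟨dist_nonneg, le_refl _⟩
      _ = dist (α s₀) x - τ := by rw [abs_of_nonpos (by linarith [hτ.2])]; ring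
    have h3 : dist x (α s₀) ≤ dist x (g₁ τ) + dist (g₁ τ) m := by
      calc dist x (α s₀) ≤ dist x m := by rw [dist_comm x (α s₀)] at hxm ⊢; exact hxm
      _ ≤ dist x (g₁ τ) + dist (g₁ τ) m := dist_triangle _ _ _
    have h4 : τ ≤ δ := by
      rw [dist_comm x (α s₀), dist_comm x (g₁ τ), h2, dist_comm (g₁ τ) m] at h3
      linarith
    have h5 : dist m (α s₀) ≤ dist m (g₁ τ) + dist (g₁ τ) (α s₀) := dist_triangle _ _ _
    rw [dist_comm (g₁ τ) (α s₀)] at h5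
    have : d/2 ≤ 2*δ := by rw [← hm0]; linarith
    linarith
  · -- u on the geodesic from x to α s₁
    have h1 : dist x (g₂ τ) = τ := by
      calc dist x (g₂ τ) = dist (g₂ 0) (g₂ τ) := by rw [hg₂.1]
      _ = |0 - τ| := hg₂.2.2 0 ⟨le_refl _, dist_nonneg⟩ τ hτ
      _ = τ := by rw [zero_sub, abs_neg, abs_of_nonneg hτ.1]
    have h2 : dist (g₂ τ) (α s₁) = dist x (α s₁) - τ := by
      calc dist (g₂ τ) (α s₁) = dist (g₂ τ) (g₂ (dist x (α s₁))) := by rw [hg₂.2.1]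
      _ = |τ - dist x (α s₁)| := hg₂.2.2 τ hτ _ ⟨dist_nonneg, le_refl _⟩
      _ = dist x (α s₁) - τ := by rw [abs_of_nonpos (by linarith [hτ.2])]; ring
    have h3 : dist x (α s₀) ≤ dist x (g₂ τ) + dist (g₂ τ) m := by
      calc dist x (α s₀) ≤ dist x m := by rw [dist_comm x (α s₀)] at hxm ⊢; exact hxm
      _ ≤ dist x (g₂ τ) + dist (g₂ τ) m := dist_triangle _ _ _
    rw [dist_comm (g₂ τ) m] at h3
    have h4 : dist (g₂ τ) (α s₁) ≤ k + δ := by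
      rw [h2]; rw [h1] at h3; linarith
    have h5 : dist m (α s₁) ≤ dist m (g₂ τ) + dist (g₂ τ) (α s₁) := dist_triangle _ _ _
    have : d/2 ≤ k + 2*δ := by rw [← hm1]; linarith
    linarith

/-- lower bound on distance to points of the line, in terms of the projection -/
lemma dist_proj_lower {δ : ℝ} (hδ : 0 ≤ δ) (hgeo : GeodesicSpace X) (hthin : ThinTriangles X δ)
    (α : ℝ → X) (hα : ∀ s t, dist (α s) (α t) = |s - t|)
    (x : X) (s₀ : ℝ) (hproj : ∀ t, dist x (α s₀) ≤ dist x (α t))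
    (s₁ : ℝ) :
    dist x (α s₀) + dist (α s₀) (α s₁) - 6 * δ ≤ dist x (α s₁) := by
  obtain ⟨σ, hσ⟩ := hgeo x (α s₀)
  obtain ⟨f, hf, hfim⟩ := line_subseg α hα s₀ s₁
  obtain ⟨η, hη⟩ := hgeo x (α s₁)
  set R := dist x (α s₀) with hR
  set d := dist (α s₀) (α s₁) with hdd
  set D := dist x (α s₁) with hD
  have hR0 : (0:ℝ) ≤ R := dist_nonneg
  have hd0 : (0:ℝ) ≤ d := dist_nonneg
  have hD0 : (0:ℝ) ≤ D := dist_nonneg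
  set Kσ := σ '' Set.Icc (0:ℝ) R with hKσ
  set Kf := f '' Set.Icc (0:ℝ) d with hKf
  have hKσc : IsCompact Kσ := geo_compact_img hσ.2.2
  have hKfc : IsCompact Kf := geo_compact_img hf.2.2
  have hKσne : Kσ.Nonempty := geo_img_nonempty hσ
  have hKfne : Kf.Nonempty := geo_img_nonempty hf
  have hlip : ∀ (K : Set X), ∀ s ∈ Set.Icc (0:ℝ) D, ∀ t ∈ Set.Icc (0:ℝ) D,
      infDist (η s) K ≤ infDist (η t) K + |s - t| := by
    intro K s hs t ht
    calc infDist (η s) K ≤ infDist (η t) K + dist (η s) (η t) := infDist_le_infDist_add_dist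
    _ = infDist (η t) K + |s - t| := by rw [hη.2.2 s hs t ht]
  obtain ⟨T, hTmem, hFT, hGT⟩ := switch_point (f := fun t => infDist (η t) Kσ)
      (g := fun t => infDist (η t) Kf) (D := D) (c := δ) hD0
    (fun s hs t ht => hlip Kσ s hs t ht) (fun s hs t ht => hlip Kf s hs t ht)
    (by rw [hη.1]
        have : x ∈ Kσ := ⟨0, ⟨le_refl _, hR0⟩, hσ.1⟩
        rw [infDist_zero_of_mem this]; exact hδ)
    (by rw [hη.2.1]
        have : α s₁ ∈ Kf := ⟨d, ⟨hd0, le_refl _⟩, hf.2.1⟩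
        rw [infDist_zero_of_mem this]; exact hδ)
    (by intro t ht
        have hthin' := hthin x (α s₀) (α s₁) σ f η hσ hf hη t ht
        obtain ⟨u, humem, hueq⟩ := (hKσc.union hKfc).exists_infDist_eq_dist
          (hKσne.mono Set.subset_union_left) (η t)
        have hud : dist (η t) u ≤ δ := by rw [← hueq]; exact hthin'
        rcases humem with hu | hu
        · exact Or.inl (le_trans (infDist_le_dist_of_mem hu) hud)
        · exact Or.inr (le_trans (infDist_le_dist_of_mem hu) hud))
  obtain ⟨a, hamem, haeq⟩ := hKσc.exists_infDist_eq_dist hKσne (η T)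
  have hda : dist (η T) a ≤ δ := by rw [← haeq]; exact hFT
  obtain ⟨w, hwmem, hweq⟩ := hKfc.exists_infDist_eq_dist hKfne (η T)
  have hdw : dist (η T) w ≤ δ := by rw [← hweq]; exact hGT
  obtain ⟨sw, hsw⟩ := hfim hwmem
  have hxw : R ≤ dist x w := by rw [← hsw]; exact hproj sw
  obtain ⟨τ, hτ, rfl⟩ := hamem
  have h1 : dist x (σ τ) = τ := by
    calc dist x (σ τ) = dist (σ 0) (σ τ) := by rw [hσ.1]
    _ = |0 - τ| := hσ.2.2 0 ⟨le_refl _, hR0⟩ τ hτ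
    _ = τ := by rw [zero_sub, abs_neg, abs_of_nonneg hτ.1]
  have h2 : dist (σ τ) (α s₀) = R - τ := by
    calc dist (σ τ) (α s₀) = dist (σ τ) (σ R) := by rw [hσ.2.1]
    _ = |τ - R| := hσ.2.2 τ hτ R ⟨hR0, le_refl _⟩
    _ = R - τ := by rw [abs_of_nonpos (by linarith [hτ.2])]; ring
  have h3 : R ≤ dist x (σ τ) + dist (σ τ) (η T) + dist (η T) w := by
    calc R ≤ dist x w := hxw
    _ ≤ dist x (η T) + dist (η T) w := dist_triangle _ _ _
    _ ≤ dist x (σ τ) + dist (σ τ) (η T) + dist (η T) w := by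
        linarith [dist_triangle x (σ τ) (η T)]
  rw [h1] at h3
  rw [dist_comm (σ τ) (η T)] at h3
  have h4 : R - τ ≤ 2*δ := by linarith
  have h5 : dist (η T) (α s₀) ≤ 3*δ := by
    calc dist (η T) (α s₀) ≤ dist (η T) (σ τ) + dist (σ τ) (α s₀) := dist_triangle _ _ _
    _ ≤ δ + (R - τ) := by rw [h2]; linarith
    _ ≤ 3*δ := by linarith
  have hx1 : dist x (η T) = T := by
    calc dist x (η T) = dist (η 0) (η T) := by rw [hη.1]
    _ = |0 - T| := hη.2.2 0 ⟨le_refl _, hD0⟩ T hTmem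
    _ = T := by rw [zero_sub, abs_neg, abs_of_nonneg hTmem.1]
  have hx2 : dist (η T) (α s₁) = D - T := by
    calc dist (η T) (α s₁) = dist (η T) (η D) := by rw [hη.2.1]
    _ = |T - D| := hη.2.2 T hTmem D ⟨hD0, le_refl _⟩
    _ = D - T := by rw [abs_of_nonpos (by linarith [hTmem.2])]; ring
  have hA : R ≤ T + 3*δ := by
    calc R ≤ dist x (η T) + dist (η T) (α s₀) := dist_triangle _ _ _
    _ ≤ T + 3*δ := by rw [hx1]; linarith
  have hB : d ≤ 3*δ + (D - T) := by
    calc d ≤ dist (α s₀) (η T) + dist (η T) (α s₁) := dist_triangle _ _ _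
    _ ≤ 3*δ + (D - T) := by rw [hx2, dist_comm (α s₀) (η T)]; linarith
  linarith

lemma triple_switch {f₁ f₂ f₃ : ℝ → ℝ} {M c : ℝ} (hM : 0 ≤ M)
    (h₁ : ∀ s ∈ Set.Icc (0:ℝ) M, ∀ t ∈ Set.Icc (0:ℝ) M, f₁ s ≤ f₁ t + |s - t|)
    (h₂ : ∀ s ∈ Set.Icc (0:ℝ) M, ∀ t ∈ Set.Icc (0:ℝ) M, f₂ s ≤ f₂ t + |s - t|)
    (h₃ : ∀ s ∈ Set.Icc (0:ℝ) M, ∀ t ∈ Set.Icc (0:ℝ) M, f₃ s ≤ f₃ t + |s - t|)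
    (hstart : f₁ 0 ≤ c) (hend : f₃ M ≤ c)
    (hcover : ∀ t ∈ Set.Icc (0:ℝ) M, f₁ t ≤ c ∨ f₂ t ≤ c ∨ f₃ t ≤ c)
    (hsep : ∀ t ∈ Set.Icc (0:ℝ) M, ¬(f₁ t ≤ c ∧ f₃ t ≤ c)) :
    ∃ t₁ t₂ : ℝ, 0 ≤ t₁ ∧ t₁ < t₂ ∧ t₂ ≤ M ∧ f₁ t₁ ≤ c ∧ f₃ t₂ ≤ c ∧
      ∀ t ∈ Set.Icc t₁ t₂, f₂ t ≤ c := by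
  set S₁ : Set ℝ := {t | t ∈ Set.Icc 0 M ∧ f₁ t ≤ c} with hS₁
  have hne₁ : S₁.Nonempty := ⟨0, ⟨le_refl _, hM⟩, hstart⟩
  have hbdd₁ : BddAbove S₁ := ⟨M, fun t ht => ht.1.2⟩
  set t₁ := sSup S₁ with ht₁
  have ht₁0 : 0 ≤ t₁ := le_csSup hbdd₁ ⟨⟨le_refl _, hM⟩, hstart⟩
  have ht₁M : t₁ ≤ M := csSup_le hne₁ fun t ht => ht.1.2
  have ht₁mem : t₁ ∈ Set.Icc (0:ℝ) M := ⟨ht₁0, ht₁M⟩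
  have hf₁t₁ : f₁ t₁ ≤ c := by
    by_contra hcon
    push_neg at hcon
    obtain ⟨s, hsS, hslt⟩ := exists_lt_of_lt_csSup hne₁ (by linarith : t₁ - (f₁ t₁ - c) < t₁)
    have hsT : s ≤ t₁ := le_csSup hbdd₁ hsS
    have := h₁ t₁ ht₁mem s hsS.1
    rw [abs_of_nonneg (by linarith)] at this
    linarith [hsS.2]
  set S₃ : Set ℝ := {t | t ∈ Set.Icc t₁ M ∧ f₃ t ≤ c} with hS₃
  have hne₃ : S₃.Nonempty := ⟨M, ⟨ht₁M, le_refl _⟩, hend⟩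
  have hbdd₃ : BddBelow S₃ := ⟨t₁, fun t ht => ht.1.1⟩
  set t₂ := sInf S₃ with ht₂
  have ht₁₂ : t₁ ≤ t₂ := le_csInf hne₃ fun t ht => ht.1.1
  have ht₂M : t₂ ≤ M := csInf_le hbdd₃ ⟨⟨ht₁M, le_refl _⟩, hend⟩
  have ht₂mem : t₂ ∈ Set.Icc (0:ℝ) M := ⟨le_trans ht₁0 ht₁₂, ht₂M⟩
  have hf₃t₂ : f₃ t₂ ≤ c := by
    by_contra hcon
    push_neg at hcon
    obtain ⟨s, hsS, hslt⟩ := exists_lt_of_csInf_lt hne₃ (by linarith : t₂ < t₂ + (f₃ t₂ - c))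
    have hsT : t₂ ≤ s := csInf_le hbdd₃ hsS
    have := h₃ t₂ ht₂mem s ⟨le_trans ht₁0 hsS.1.1, hsS.1.2⟩
    rw [abs_of_nonpos (by linarith)] at this
    linarith [hsS.2]
  have hlt : t₁ < t₂ := by
    rcases lt_or_eq_of_le ht₁₂ with hlt | heq
    · exact hlt
    · exact absurd ⟨hf₁t₁, heq ▸ hf₃t₂⟩ (hsep t₁ ht₁mem)
  have hmid : ∀ t, t₁ < t → t < t₂ → f₂ t ≤ c := by
    intro t hta htb
    have htmem : t ∈ Set.Icc (0:ℝ) M := ⟨by linarith, by linarith⟩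
    have hnf₁ : ¬ f₁ t ≤ c := fun hle => absurd (le_csSup hbdd₁ ⟨htmem, hle⟩) (by linarith)
    have hnf₃ : ¬ f₃ t ≤ c := fun hle =>
      absurd (csInf_le hbdd₃ ⟨⟨le_of_lt hta, htmem.2⟩, hle⟩) (by linarith)
    rcases hcover t htmem with h | h | h
    · exact absurd h hnf₁
    · exact h
    · exact absurd h hnf₃
  have hf₂t₁ : f₂ t₁ ≤ c := by
    by_contra hcon
    push_neg at hcon
    set t := min (t₁ + (f₂ t₁ - c)/2) ((t₁ + t₂)/2) with htdef
    have hta : t₁ < t := lt_min (by linarith) (by linarith)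
    have htb : t < t₂ := lt_of_le_of_lt (min_le_right _ _) (by linarith)
    have hf2t : f₂ t ≤ c := hmid t hta htb
    have h2 := h₂ t₁ ht₁mem t ⟨by linarith, by linarith⟩
    rw [abs_of_nonpos (by linarith)] at h2
    have h3 : t - t₁ ≤ (f₂ t₁ - c)/2 := by
      have hm3 := min_le_left (t₁ + (f₂ t₁ - c)/2) ((t₁ + t₂)/2)
      rw [← htdef] at hm3
      linarith
    linarith
  have hf₂t₂ : f₂ t₂ ≤ c := by
    by_contra hcon
    push_neg at hcon
    set t := max (t₂ - (f₂ t₂ - c)/2) ((t₁ + t₂)/2) with htdef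
    have hta : t < t₂ := max_lt (by linarith) (by linarith)
    have htb : t₁ < t := lt_of_lt_of_le (by linarith) (le_max_right _ _)
    have hf2t : f₂ t ≤ c := hmid t htb hta
    have h2 := h₂ t₂ ht₂mem t ⟨by linarith, by linarith⟩
    rw [abs_of_nonneg (by linarith)] at h2
    have h3 : t₂ - t ≤ (f₂ t₂ - c)/2 := by
      have hm3 := le_max_left (t₂ - (f₂ t₂ - c)/2) ((t₁ + t₂)/2)
      rw [← htdef] at hm3
      linarith
    linarith
  have hend₂ : ∀ u ∈ Set.Icc t₁ t₂, f₂ u ≤ c := by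
    intro u hu
    rcases eq_or_lt_of_le hu.1 with heq | hu1
    · rw [← heq]; exact hf₂t₁
    rcases eq_or_lt_of_le hu.2 with heq | hu2
    · rw [heq]; exact hf₂t₂
    exact hmid u hu1 hu2
  exact ⟨t₁, t₂, ht₁0, hlt, ht₂M, hf₁t₁, hf₃t₂, hend₂⟩

/-- There exist constants `D₁, D₂ ≥ 0` depending only on `δ` such that in any
`δ`-hyperbolic geodesic space `X`, if an isometry `h` of `X` admits a geodesic axis `α`
(a bi-infinite geodesic with `hⁿ(α)` in the `2δ`-neighborhood of `α` for all `n : ℤ`),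
`q` is a nearest-point projection of `x` to `α`, and `dist q (h q) > 28δ`, then every
geodesic `γ` from `x` to `h x` decomposes as `γ₁γ₂γ₃` where the endpoint of `γ₁`
(resp. starting point of `γ₃`) is `D₁`-close to `q` (resp. `h q`), `γ₂` lies in the
`D₂`-neighborhood of `α`, and `γ₂` has length at least `dist q (h q) - 28δ`. -/
theorem random_walk_axis_decomposition (δ : ℝ) (hδ : 0 ≤ δ) :
    ∃ D₁ D₂ : ℝ, 0 ≤ D₁ ∧ 0 ≤ D₂ ∧
      ∀ (X : Type) [inst : MetricSpace X], GeodesicSpace X → ThinTriangles X δ →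
      ∀ (h : X ≃ᵢ X) (α : ℝ → X),
        (∀ s t : ℝ, dist (α s) (α t) = |s - t|) →
        (∀ n : ℤ, ∀ t : ℝ, Metric.infDist ((h ^ n) (α t)) (Set.range α) ≤ 2 * δ) →
      ∀ x q : X, q ∈ Set.range α → (∀ t : ℝ, dist x q ≤ dist x (α t)) →
        dist q (h q) > 28 * δ →
      ∀ γ : ℝ → X, IsGeodesicSegment γ x (h x) →
      ∃ t₁ t₂ : ℝ, 0 ≤ t₁ ∧ t₁ ≤ t₂ ∧ t₂ ≤ dist x (h x) ∧
        dist (γ t₁) q ≤ D₁ ∧ dist (γ t₂) (h q) ≤ D₁ ∧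
        (∀ t ∈ Set.Icc t₁ t₂, Metric.infDist (γ t) (Set.range α) ≤ D₂) ∧
        dist q (h q) - 28 * δ ≤ t₂ - t₁ := by
  refine ⟨11 * δ, 5 * δ, by linarith, by linarith, ?_⟩
  intro X inst hgeo hthin h α hα haxis x q hqmem hproj hL γ hγ
  obtain ⟨s₀, rfl⟩ := hqmem
  -- the image line β = h ∘ α
  set β : ℝ → X := fun t => h (α t) with hβ
  have hβline : ∀ s t : ℝ, dist (β s) (β t) = |s - t| := fun s t => by
    rw [hβ]; simp only; rw [h.dist_eq, hα]
  have hrange_ne : (Set.range α).Nonempty := ⟨α 0, 0, rfl⟩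
  have near₁ : ∀ u : ℝ, ∀ ε > (0:ℝ), ∃ s, dist (β u) (α s) < 2*δ + ε := by
    intro u ε hε
    have h1 : infDist ((h ^ (1:ℤ)) (α u)) (Set.range α) ≤ 2*δ := haxis 1 u
    rw [zpow_one] at h1
    have h2 : infDist (h (α u)) (Set.range α) < 2*δ + ε := lt_of_le_of_lt h1 (by linarith)
    obtain ⟨y, hy, hd⟩ := (infDist_lt_iff hrange_ne).mp h2
    obtain ⟨s, rfl⟩ := hy
    exact ⟨s, hd⟩
  have near₂ : ∀ s : ℝ, ∀ ε > (0:ℝ), ∃ u, dist (α s) (β u) < 2*δ + ε := by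
    intro s ε hε
    have h1 : infDist ((h ^ (-1:ℤ)) (α s)) (Set.range α) ≤ 2*δ := haxis (-1) s
    rw [zpow_neg_one] at h1
    have h1' : infDist (h.symm (α s)) (Set.range α) ≤ 2*δ := h1
    have h2 : infDist (h.symm (α s)) (Set.range α) < 2*δ + ε := lt_of_le_of_lt h1' (by linarith)
    obtain ⟨y, hy, hd⟩ := (infDist_lt_iff hrange_ne).mp h2
    obtain ⟨u, rfl⟩ := hy
    refine ⟨u, ?_⟩
    have heq : dist (h (h.symm (α s))) (h (α u)) = dist (h.symm (α s)) (α u) := h.dist_eq _ _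
    rw [h.apply_symm_apply] at heq
    calc dist (α s) (β u) = dist (α s) (h (α u)) := rfl
    _ = dist (h.symm (α s)) (α u) := heq
    _ < 2*δ + ε := hd
  -- projection property of h (α s₀) to β
  have hprojβ : ∀ u : ℝ, dist (h x) (h (α s₀)) ≤ dist (h x) (β u) := by
    intro u
    calc dist (h x) (h (α s₀)) = dist x (α s₀) := h.dist_eq _ _
    _ ≤ dist x (α u) := hproj u
    _ = dist (h x) (h (α u)) := (h.dist_eq _ _).symm
    _ = dist (h x) (β u) := rfl
  set R := dist x (α s₀) with hR
  set L := dist (α s₀) (h (α s₀)) with hLdef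
  set M := dist x (h x) with hM
  have hR0 : (0:ℝ) ≤ R := dist_nonneg
  have hL0 : (0:ℝ) ≤ L := dist_nonneg
  have hM0 : (0:ℝ) ≤ M := dist_nonneg
  have hRR : dist (h (α s₀)) (h x) = R := by
    rw [h.dist_eq, dist_comm]
  obtain ⟨σ₁, hσ₁⟩ := hgeo x (α s₀)
  obtain ⟨σ₂, hσ₂⟩ := hgeo (α s₀) (h (α s₀))
  obtain ⟨σ₃, hσ₃⟩ := hgeo (h (α s₀)) (h x)
  obtain ⟨τg, hτg⟩ := hgeo (α s₀) (h x)
  set K₁ := σ₁ '' Set.Icc (0:ℝ) R with hK₁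
  set K₂ := σ₂ '' Set.Icc (0:ℝ) L with hK₂
  set K₃ := σ₃ '' Set.Icc (0:ℝ) (dist (h (α s₀)) (h x)) with hK₃
  have hK₁c : IsCompact K₁ := geo_compact_img hσ₁.2.2
  have hK₂c : IsCompact K₂ := geo_compact_img hσ₂.2.2
  have hK₃c : IsCompact K₃ := geo_compact_img hσ₃.2.2
  have hK₁ne : K₁.Nonempty := geo_img_nonempty hσ₁
  have hK₂ne : K₂.Nonempty := geo_img_nonempty hσ₂
  have hK₃ne : K₃.Nonempty := geo_img_nonempty hσ₃
  -- points of K₁: on the segment from x to (α s₀), with projection (α s₀)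
  have K₁prop : ∀ a ∈ K₁, dist x a + dist a (α s₀) = R ∧ ∀ s, dist a (α s₀) ≤ dist a (α s) := by
    rintro a ⟨τ, hτ, rfl⟩
    have h1 : dist x (σ₁ τ) = τ := by
      calc dist x (σ₁ τ) = dist (σ₁ 0) (σ₁ τ) := by rw [hσ₁.1]
      _ = |0 - τ| := hσ₁.2.2 0 ⟨le_refl _, hR0⟩ τ hτ
      _ = τ := by rw [zero_sub, abs_neg, abs_of_nonneg hτ.1]
    have h2 : dist (σ₁ τ) (α s₀) = R - τ := by
      calc dist (σ₁ τ) (α s₀) = dist (σ₁ τ) (σ₁ R) := by rw [hσ₁.2.1]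
      _ = |τ - R| := hσ₁.2.2 τ hτ R ⟨hR0, le_refl _⟩
      _ = R - τ := by rw [abs_of_nonpos (by linarith [hτ.2])]; ring
    refine ⟨by linarith, fun s => ?_⟩
    have h3 : dist x (α s) ≤ dist x (σ₁ τ) + dist (σ₁ τ) (α s) := dist_triangle _ _ _
    have h4 : R ≤ dist x (α s) := hproj s
    rw [h1] at h3
    linarith
  -- points of K₃: on the segment from h (α s₀) to h x, with projection h (α s₀) to β
  have K₃prop : ∀ c ∈ K₃, ∀ u, dist c (h (α s₀)) ≤ dist c (β u) := by
    rintro c ⟨τ, hτ, rfl⟩ u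
    have h1 : dist (h (α s₀)) (σ₃ τ) = τ := by
      calc dist (h (α s₀)) (σ₃ τ) = dist (σ₃ 0) (σ₃ τ) := by rw [hσ₃.1]
      _ = |0 - τ| := hσ₃.2.2 0 ⟨le_refl _, dist_nonneg⟩ τ hτ
      _ = τ := by rw [zero_sub, abs_neg, abs_of_nonneg hτ.1]
    have h2 : dist (σ₃ τ) (h x) = dist (h (α s₀)) (h x) - τ := by
      calc dist (σ₃ τ) (h x) = dist (σ₃ τ) (σ₃ (dist (h (α s₀)) (h x))) := by rw [hσ₃.2.1]
      _ = |τ - dist (h (α s₀)) (h x)| := hσ₃.2.2 τ hτ _ ⟨dist_nonneg, le_refl _⟩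
      _ = dist (h (α s₀)) (h x) - τ := by rw [abs_of_nonpos (by linarith [hτ.2])]; ring
    have h3 : dist (h x) (β u) ≤ dist (h x) (σ₃ τ) + dist (σ₃ τ) (β u) := dist_triangle _ _ _
    have h4 : dist (h x) (h (α s₀)) ≤ dist (h x) (β u) := hprojβ u
    rw [dist_comm (σ₃ τ) (h (α s₀)), h1]
    rw [dist_comm (h x) (σ₃ τ), h2] at h3
    rw [dist_comm (h x) (h (α s₀))] at h4
    linarith
  -- points of K₂ are 3δ-close to the line α
  have K₂near : ∀ b ∈ K₂, infDist b (Set.range α) ≤ 3*δ := by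
    rintro b ⟨τb, hτb, rfl⟩
    refine le_of_forall_pos_le_add fun ε hε => ?_
    obtain ⟨s₁, hs₁⟩ := near₁ s₀ ε hε
    have hs₁' : dist (h (α s₀)) (α s₁) < 2*δ + ε := hs₁
    obtain ⟨f, hf, hfim⟩ := line_subseg α hα s₀ s₁
    obtain ⟨g, hg⟩ := hgeo (α s₁) (h (α s₀))
    have hthin' := hthin (α s₀) (α s₁) (h (α s₀)) f g σ₂ hf hg hσ₂ τb hτb
    obtain ⟨u, humem, hueq⟩ :=
      ((geo_compact_img hf.2.2).union (geo_compact_img hg.2.2)).exists_infDist_eq_dist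
      ((geo_img_nonempty hf).mono Set.subset_union_left) (σ₂ τb)
    have hud : dist (σ₂ τb) u ≤ δ := by rw [← hueq]; exact hthin'
    rcases humem with hu | ⟨τ, hτ, rfl⟩
    · have hmem : u ∈ Set.range α := hfim hu
      have h7 : infDist (σ₂ τb) (Set.range α) ≤ dist (σ₂ τb) u := infDist_le_dist_of_mem hmem
      linarith
    · have h1 : dist (α s₁) (g τ) = τ := by
        calc dist (α s₁) (g τ) = dist (g 0) (g τ) := by rw [hg.1]
        _ = |0 - τ| := hg.2.2 0 ⟨le_refl _, dist_nonneg⟩ τ hτ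
        _ = τ := by rw [zero_sub, abs_neg, abs_of_nonneg hτ.1]
      have h2 : infDist (σ₂ τb) (Set.range α) ≤ dist (σ₂ τb) (α s₁) :=
        infDist_le_dist_of_mem ⟨s₁, rfl⟩
      have h3 : dist (σ₂ τb) (α s₁) ≤ dist (σ₂ τb) (g τ) + dist (g τ) (α s₁) :=
        dist_triangle _ _ _
      rw [dist_comm (g τ) (α s₁), h1] at h3
      have h5 : τ ≤ dist (α s₁) (h (α s₀)) := hτ.2
      have h6 : dist (α s₁) (h (α s₀)) < 2*δ + ε := by rw [dist_comm]; exact hs₁'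
      linarith
  -- covering by the three sides
  have cover : ∀ t ∈ Set.Icc (0:ℝ) M, ∃ y, (y ∈ K₁ ∨ y ∈ K₂ ∨ y ∈ K₃) ∧ dist (γ t) y ≤ 2*δ := by
    intro t ht
    have hthin1 := hthin x (α s₀) (h x) σ₁ τg γ hσ₁ hτg hγ t ht
    obtain ⟨u, humem, hueq⟩ := (hK₁c.union (geo_compact_img hτg.2.2)).exists_infDist_eq_dist
      (hK₁ne.mono Set.subset_union_left) (γ t)
    have hud : dist (γ t) u ≤ δ := by rw [← hueq]; exact hthin1
    rcases humem with hu | ⟨τ', hτ', rfl⟩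
    · exact ⟨u, Or.inl hu, by linarith⟩
    · have hthin2 := hthin (α s₀) (h (α s₀)) (h x) σ₂ σ₃ τg hσ₂ hσ₃ hτg τ' hτ'
      obtain ⟨v, hvmem, hveq⟩ := (hK₂c.union hK₃c).exists_infDist_eq_dist
        (hK₂ne.mono Set.subset_union_left) (τg τ')
      have hvd : dist (τg τ') v ≤ δ := by rw [← hveq]; exact hthin2
      refine ⟨v, ?_, ?_⟩
      · rcases hvmem with hv | hv
        · exact Or.inr (Or.inl hv)
        · exact Or.inr (Or.inr hv)
      · calc dist (γ t) v ≤ dist (γ t) (τg τ') + dist (τg τ') v := dist_triangle _ _ _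
        _ ≤ 2*δ := by linarith
  -- Lipschitz property of the distance functions along γ
  have hlip : ∀ (K : Set X), ∀ s ∈ Set.Icc (0:ℝ) M, ∀ t ∈ Set.Icc (0:ℝ) M,
      infDist (γ s) K ≤ infDist (γ t) K + |s - t| := by
    intro K s hs t ht
    calc infDist (γ s) K ≤ infDist (γ t) K + dist (γ s) (γ t) := infDist_le_infDist_add_dist
    _ = infDist (γ t) K + |s - t| := by rw [hγ.2.2 s hs t ht]
  -- separation: no point of γ is 2δ-close to both K₁ and K₃
  have hsep : ∀ t ∈ Set.Icc (0:ℝ) M, ¬(infDist (γ t) K₁ ≤ 2*δ ∧ infDist (γ t) K₃ ≤ 2*δ) := by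
    rintro t ht ⟨hf1, hf3⟩
    obtain ⟨a, hamem, haeq⟩ := hK₁c.exists_infDist_eq_dist hK₁ne (γ t)
    have hda : dist (γ t) a ≤ 2*δ := by rw [← haeq]; exact hf1
    obtain ⟨c, hcmem, hceq⟩ := hK₃c.exists_infDist_eq_dist hK₃ne (γ t)
    have hdc : dist (γ t) c ≤ 2*δ := by rw [← hceq]; exact hf3
    have hac : dist a c ≤ 4*δ := by
      calc dist a c ≤ dist a (γ t) + dist (γ t) c := dist_triangle _ _ _
      _ ≤ 4*δ := by rw [dist_comm a (γ t)]; linarith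
    obtain ⟨-, hproja⟩ := K₁prop a hamem
    have hprojc := K₃prop c hcmem
    obtain ⟨sp, hsp⟩ := exists_nearest α hα c
    have hqp : dist (α s₀) (α sp) ≤ 14*δ := by
      have hlow := dist_proj_lower hδ hgeo hthin α hα a s₀ (fun t' => hproja t') sp
      have h1 : dist a (α sp) ≤ dist a c + dist c (α sp) := dist_triangle _ _ _
      have h2 : dist c (α sp) ≤ dist c (α s₀) := hsp s₀
      have h3 : dist c (α s₀) ≤ dist c a + dist a (α s₀) := dist_triangle _ _ _
      have h4 : dist c a = dist a c := dist_comm _ _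
      linarith
    have hphq : dist (α sp) (h (α s₀)) ≤ 14*δ := by
      refine le_of_forall_pos_le_add fun ε hε => ?_
      have hε5 : (0:ℝ) < ε/5 := by linarith
      obtain ⟨u, hu⟩ := near₂ sp (ε/5) hε5
      obtain ⟨s', hs'⟩ := near₁ s₀ (ε/5) hε5
      have hs'' : dist (h (α s₀)) (α s') < 2*δ + ε/5 := hs'
      have hcp_le : dist c (α sp) ≤ dist c (h (α s₀)) + (2*δ + ε/5) := by
        calc dist c (α sp) ≤ dist c (α s') := hsp s'
        _ ≤ dist c (h (α s₀)) + dist (h (α s₀)) (α s') := dist_triangle _ _ _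
        _ ≤ dist c (h (α s₀)) + (2*δ + ε/5) := by linarith
      have hcw : dist c (β u) ≤ dist c (β s₀) + (4*δ + 2*(ε/5)) := by
        have e1 : dist c (β u) ≤ dist c (α sp) + dist (α sp) (β u) := dist_triangle _ _ _
        have e2 : dist c (β s₀) = dist c (h (α s₀)) := rfl
        rw [e2]
        linarith [hu]
      have hcu := coarse_unique hδ hgeo hthin β hβline c s₀
        (fun u' => hprojc u') u (k := 4*δ + 2*(ε/5)) (by linarith) hcw
      have e3 : dist (α sp) (h (α s₀)) ≤ dist (α sp) (β u) + dist (β u) (β s₀) := by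
        have := dist_triangle (α sp) (β u) (β s₀)
        exact this
      have e4 : dist (β u) (β s₀) = dist (β s₀) (β u) := dist_comm _ _
      linarith [hu, hcu]
    have hcontr : L ≤ 28*δ := by
      have := dist_triangle (α s₀) (α sp) (h (α s₀))
      calc L = dist (α s₀) (h (α s₀)) := hLdef
      _ ≤ 28*δ := by linarith
    linarith
  -- apply the switching lemma
  obtain ⟨t₁, t₂, ht₁0, hlt, ht₂M, hf₁t₁, hf₃t₂, hmidf⟩ :=
    triple_switch (f₁ := fun t => infDist (γ t) K₁) (f₂ := fun t => infDist (γ t) K₂)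
      (f₃ := fun t => infDist (γ t) K₃) (c := 2*δ) hM0
      (fun s hs t ht => hlip K₁ s hs t ht) (fun s hs t ht => hlip K₂ s hs t ht)
      (fun s hs t ht => hlip K₃ s hs t ht)
      (by
          have hx1 : x ∈ K₁ := ⟨0, ⟨le_refl _, hR0⟩, hσ₁.1⟩
          rw [hγ.1, infDist_zero_of_mem hx1]
          linarith)
      (by
          have hx3 : h x ∈ K₃ := ⟨dist (h (α s₀)) (h x), ⟨dist_nonneg, le_refl _⟩, hσ₃.2.1⟩
          rw [hγ.2.1, infDist_zero_of_mem hx3]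
          linarith)
      (by intro t ht
          obtain ⟨y, hy, hdy⟩ := cover t ht
          rcases hy with hy | hy | hy
          · exact Or.inl (le_trans (infDist_le_dist_of_mem hy) hdy)
          · exact Or.inr (Or.inl (le_trans (infDist_le_dist_of_mem hy) hdy))
          · exact Or.inr (Or.inr (le_trans (infDist_le_dist_of_mem hy) hdy)))
      hsep
  have ht₁mem : t₁ ∈ Set.Icc (0:ℝ) M := ⟨ht₁0, le_trans (le_of_lt hlt) ht₂M⟩
  have ht₂mem : t₂ ∈ Set.Icc (0:ℝ) M := ⟨by linarith, ht₂M⟩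
  -- estimate at t₁
  obtain ⟨a, hamem, haeq⟩ := hK₁c.exists_infDist_eq_dist hK₁ne (γ t₁)
  have hda : dist (γ t₁) a ≤ 2*δ := by rw [← haeq]; exact hf₁t₁
  obtain ⟨b, hbmem, hbeq⟩ := hK₂c.exists_infDist_eq_dist hK₂ne (γ t₁)
  have hdb : dist (γ t₁) b ≤ 2*δ := by rw [← hbeq]; exact hmidf t₁ ⟨le_refl _, le_of_lt hlt⟩
  obtain ⟨haq, -⟩ := K₁prop a hamem
  have est₁ : dist (γ t₁) (α s₀) ≤ 9*δ := by
    have key : dist a (α s₀) ≤ 7*δ := by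
      refine le_of_forall_pos_le_add fun ε hε => ?_
      have h2 : infDist b (Set.range α) ≤ 3*δ := K₂near b hbmem
      obtain ⟨y, hy, hdy⟩ := (infDist_lt_iff hrange_ne).mp
        (lt_of_le_of_lt h2 (by linarith : 3*δ < 3*δ + ε))
      obtain ⟨s, rfl⟩ := hy
      have h4 : R ≤ dist x (α s) := hproj s
      have e1 : dist x (α s) ≤ dist x a + dist a (α s) := dist_triangle _ _ _
      have e2 : dist a (α s) ≤ dist a (γ t₁) + dist (γ t₁) (α s) := dist_triangle _ _ _
      have e3 : dist (γ t₁) (α s) ≤ dist (γ t₁) b + dist b (α s) := dist_triangle _ _ _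
      have e4 : dist a (γ t₁) = dist (γ t₁) a := dist_comm _ _
      linarith
    calc dist (γ t₁) (α s₀) ≤ dist (γ t₁) a + dist a (α s₀) := dist_triangle _ _ _
    _ ≤ 9*δ := by linarith
  -- estimate at t₂
  obtain ⟨c, hcmem, hceq⟩ := hK₃c.exists_infDist_eq_dist hK₃ne (γ t₂)
  have hdc : dist (γ t₂) c ≤ 2*δ := by rw [← hceq]; exact hf₃t₂
  obtain ⟨b₂, hb₂mem, hb₂eq⟩ := hK₂c.exists_infDist_eq_dist hK₂ne (γ t₂)
  have hdb₂ : dist (γ t₂) b₂ ≤ 2*δ := by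
    rw [← hb₂eq]; exact hmidf t₂ ⟨le_of_lt hlt, le_refl _⟩
  have hprojc := K₃prop c hcmem
  have est₂ : dist (γ t₂) (h (α s₀)) ≤ 11*δ := by
    have key : dist c (h (α s₀)) ≤ 9*δ := by
      refine le_of_forall_pos_le_add fun ε hε => ?_
      have hε2 : (0:ℝ) < ε/2 := by linarith
      have h2 : infDist b₂ (Set.range α) ≤ 3*δ := K₂near b₂ hb₂mem
      obtain ⟨y, hy, hdy⟩ := (infDist_lt_iff hrange_ne).mp
        (lt_of_le_of_lt h2 (by linarith : 3*δ < 3*δ + ε/2))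
      obtain ⟨s, rfl⟩ := hy
      obtain ⟨u, hu⟩ := near₂ s (ε/2) hε2
      have e0 : dist c (h (α s₀)) ≤ dist c (β u) := hprojc u
      have e1 : dist c (β u) ≤ dist c (γ t₂) + dist (γ t₂) (β u) := dist_triangle _ _ _
      have e2 : dist (γ t₂) (β u) ≤ dist (γ t₂) b₂ + dist b₂ (β u) := dist_triangle _ _ _
      have e3 : dist b₂ (β u) ≤ dist b₂ (α s) + dist (α s) (β u) := dist_triangle _ _ _
      have e4 : dist c (γ t₂) = dist (γ t₂) c := dist_comm _ _
      linarith
    calc dist (γ t₂) (h (α s₀)) ≤ dist (γ t₂) c + dist c (h (α s₀)) := dist_triangle _ _ _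
    _ ≤ 11*δ := by linarith
  -- middle segment stays near the axis
  have hmid : ∀ t ∈ Set.Icc t₁ t₂, infDist (γ t) (Set.range α) ≤ 5*δ := by
    intro t htm
    obtain ⟨b', hb'mem, hb'eq⟩ := hK₂c.exists_infDist_eq_dist hK₂ne (γ t)
    have hdb' : dist (γ t) b' ≤ 2*δ := by rw [← hb'eq]; exact hmidf t htm
    calc infDist (γ t) (Set.range α) ≤ infDist b' (Set.range α) + dist (γ t) b' :=
      infDist_le_infDist_add_dist
    _ ≤ 3*δ + 2*δ := add_le_add (K₂near b' hb'mem) hdb'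
    _ = 5*δ := by ring
  -- length of the middle segment
  have hlen : dist (γ t₁) (γ t₂) = t₂ - t₁ := by
    rw [hγ.2.2 t₁ ht₁mem t₂ ht₂mem, abs_of_nonpos (by linarith)]; ring
  have hlen2 : L - 28*δ ≤ t₂ - t₁ := by
    have e1 : dist (α s₀) (h (α s₀)) ≤ dist (α s₀) (γ t₁) + dist (γ t₁) (h (α s₀)) :=
      dist_triangle _ _ _
    have e2 : dist (γ t₁) (h (α s₀)) ≤ dist (γ t₁) (γ t₂) + dist (γ t₂) (h (α s₀)) :=
      dist_triangle _ _ _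
    have e3 : dist (α s₀) (γ t₁) = dist (γ t₁) (α s₀) := dist_comm _ _
    have e4 : L = dist (α s₀) (h (α s₀)) := hLdef
    linarith
  exact ⟨t₁, t₂, ht₁0, le_of_lt hlt, ht₂M, by linarith, by linarith, hmid, hlen2⟩
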